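/- Let k and α be nonzero complex numbers, X > 0, and let K₀ : {(x*, x) : 0 < x < x*} → ℂ, ζ(τ) = (k/τ) exp(−ikα²/(2τ)), and G : (0, ∞) → ℂ satisfy K₀(x*, x) = τ² ζ(τ) ζ(τ*)^{−1} G(τ − τ*) with τ = 1/x, τ* = 1/x*. Suppose U : (0, X] → ℂ is continuous, x ↦ K₀(x*, x) U(x) is integrable on (0, x*) for each x* ∈ (0, X], and U satisfies the Volterra equation U(x*) = ∫₀^{x*} K₀(x*, x) U(x) dx + 2 for all x* ∈ (0, X]. Then the function V(τ) = ζ(τ) U(1/τ), defined for τ ≥ 1/X, satisfies the convolution equation V(τ*) = ∫_{τ*}^{∞} G(τ − τ*) V(τ) dτ + 2 ζ(τ*) for all τ* ≥ 1/X. -/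

import Mathlib

open Complex Real MeasureTheory intervalIntegral

/-- Under the substitution `τ = 1/x`, the Volterra integral equation of the
cone problem becomes an integral equation of convolution type. -/
theorem cone_volterra_to_convolution
    (k α : ℂ) (hk : k ≠ 0) (hα : α ≠ 0) (X : ℝ) (hX : 0 < X)
    (K₀ : ℝ → ℝ → ℂ) (G : ℝ → ℂ)
    (ζ : ℝ → ℂ)
    (hζ : ∀ t : ℝ, ζ t = k / t * Complex.exp (-Complex.I * k * α ^ 2 / (2 * t)))
    (hfact : ∀ xstar x : ℝ, 0 < x → x < xstar →
      K₀ xstar x = ((1 / x : ℝ) : ℂ) ^ 2 * ζ (1 / x) * (ζ (1 / xstar))⁻¹ *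
        G (1 / x - 1 / xstar))
    (U : ℝ → ℂ)
    (hUc : ContinuousOn U (Set.Ioc 0 X))
    (hUint : ∀ xstar ∈ Set.Ioc (0:ℝ) X,
      IntegrableOn (fun x => K₀ xstar x * U x) (Set.Ioo 0 xstar))
    (heq : ∀ xstar ∈ Set.Ioc (0:ℝ) X,
      U xstar = (∫ x in Set.Ioo 0 xstar, K₀ xstar x * U x) + 2)
    (V : ℝ → ℂ) (hV : ∀ τ : ℝ, V τ = ζ τ * U (1 / τ)) :
    ∀ τstar : ℝ, 1 / X ≤ τstar →
      V τstar = (∫ τ in Set.Ioi τstar, G (τ - τstar) * V τ) + 2 * ζ τstar := by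
  intro τstar hτ
  have hτ0 : 0 < τstar := lt_of_lt_of_le (by positivity) hτ
  have hxmem : (1 / τstar : ℝ) ∈ Set.Ioc (0:ℝ) X := by
    constructor
    · positivity
    · rw [div_le_iff₀ hτ0]
      have h := (div_le_iff₀ hX).mp hτ
      nlinarith
  have hζne : ζ τstar ≠ 0 := by
    rw [hζ]
    apply mul_ne_zero
    · exact div_ne_zero hk (by exact_mod_cast hτ0.ne')
    · exact Complex.exp_ne_zero _
  -- change of variables
  have himg : (fun x : ℝ => x⁻¹) '' Set.Ioi τstar = Set.Ioo 0 (1/τstar) := by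
    ext y
    constructor
    · rintro ⟨x, hx, rfl⟩
      have hx0 : 0 < x := lt_trans hτ0 hx
      exact ⟨by positivity, by rw [one_div]; exact inv_strictAnti₀ hτ0 hx⟩
    · rintro ⟨hy0, hy1⟩
      refine ⟨y⁻¹, ?_, by simp⟩
      rw [Set.mem_Ioi, ← one_div, lt_div_iff₀ hy0, mul_comm, ← lt_div_iff₀ hτ0]
      exact hy1
  have hderiv : ∀ x ∈ Set.Ioi τstar,
      HasDerivWithinAt (fun x : ℝ => x⁻¹) (-(x^2)⁻¹) (Set.Ioi τstar) x := by
    intro x hx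
    exact (hasDerivAt_inv (lt_trans hτ0 hx).ne').hasDerivWithinAt
  have hcov := integral_image_eq_integral_abs_deriv_smul (f := fun x : ℝ => x⁻¹)
      (f' := fun x : ℝ => -(x^2)⁻¹) measurableSet_Ioi hderiv
      (inv_injective.injOn) (fun x => K₀ (1/τstar) x * U x)
  rw [himg] at hcov
  have hint : ∀ τ ∈ Set.Ioi τstar,
      |(-(τ^2)⁻¹)| • (K₀ (1/τstar) τ⁻¹ * U τ⁻¹)
        = (ζ τstar)⁻¹ * (G (τ - τstar) * V τ) := by
    intro τ hτ'
    have hτ'' : τstar < τ := hτ'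
    have hτp : 0 < τ := lt_trans hτ0 hτ''
    have h1 : (0:ℝ) < τ⁻¹ := by positivity
    have h2 : τ⁻¹ < 1/τstar := by
      rw [one_div]
      exact inv_strictAnti₀ hτ0 hτ''
    rw [hfact _ _ h1 h2]
    have hiv : (1 : ℝ) / τ⁻¹ = τ := by field_simp
    rw [hiv, hV τ, abs_neg, abs_inv, abs_of_pos (by positivity : (0:ℝ) < τ^2)]
    have h11 : (1:ℝ)/(1/τstar) = τstar := by field_simp
    rw [h11]
    have : (1 : ℝ) / τ = τ⁻¹ := one_div τ
    rw [← this]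
    simp only [Complex.real_smul]
    push_cast
    have hτC : (τ : ℂ) ≠ 0 := by exact_mod_cast hτp.ne'
    field_simp
  rw [MeasureTheory.setIntegral_congr_fun measurableSet_Ioi hint] at hcov
  -- Volterra equation at 1/τstar
  have hU := heq _ hxmem
  have hVτ : V τstar = ζ τstar * U (1/τstar) := hV τstar
  rw [hU, hcov, MeasureTheory.integral_const_mul, mul_add, ← mul_assoc,
    mul_inv_cancel₀ hζne, one_mul, mul_comm (ζ τstar) 2] at hVτ
  exact hVτ
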